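/- (Lemma 6 of the paper, pathwise subadditivity of reflected branching in the initial value.) Let y₁, y₂ be positive integers and suppose Λ_n^{y₁} and Λ_n^{y₂} are reflected branching processes Λ_{n+1}^{y} = max(Σ_{i=1}^{Λ_n^y} B_n^{i}(J_n), y) driven by the same modulating sequence {J_n} but conditionally independent increment families, with barriers y₁ and y₂ respectively. Then Λ_n^{y₁ + y₂} is stochastically dominated by Λ_n^{y₁} + Λ_n^{y₂}: P[Λ_n^{y₁+y₂} > x] ≤ P[Λ_n^{y₁} + Λ_n^{y₂} > x] for all x and n. -/

import Mathlib

open MeasureTheory ProbabilityTheory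
open scoped ENNReal
open scoped Function

section Aux

variable {Ω : Type*}

lemma aux_measurable_sum_rand {m : MeasurableSpace Ω} {K : Ω → ℕ} {g : ℕ → Ω → ℕ}
    (hK : Measurable[m] K) (hg : ∀ i, Measurable[m] (g i)) :
    Measurable[m] fun ω => ∑ i ∈ Finset.range (K ω), g i ω := by
  apply measurable_to_countable'
  intro y
  have h : (fun ω => ∑ i ∈ Finset.range (K ω), g i ω) ⁻¹' {y}
      = ⋃ k, ({ω | K ω = k} ∩ {ω | (∑ i ∈ Finset.range k, g i ω) = y}) := by
    ext ω
    simp only [Set.mem_preimage, Set.mem_singleton_iff, Set.mem_iUnion, Set.mem_inter_iff,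
      Set.mem_setOf_eq]
    exact ⟨fun h => ⟨K ω, rfl, h⟩, fun ⟨k, hk, h⟩ => by rw [hk]; exact h⟩
  rw [h]
  exact MeasurableSet.iUnion fun k =>
    (hK (measurableSet_singleton k)).inter
      ((Finset.measurable_sum _ fun i _ => hg i) (measurableSet_singleton y))

noncomputable def convPow (μ : Measure ℕ) : ℕ → Measure ℕ
  | 0 => Measure.dirac 0
  | k + 1 => Measure.conv (convPow μ k) μ

lemma aux_map_add_eq_conv [MeasurableSpace Ω] (P : Measure Ω) [IsProbabilityMeasure P]
    {X Y : Ω → ℕ} (hX : Measurable X) (hY : Measurable Y) (h : IndepFun X Y P) :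
    P.map (fun ω => X ω + Y ω) = Measure.conv (P.map X) (P.map Y) := by
  have hm := (indepFun_iff_map_prod_eq_prod_map_map hX.aemeasurable hY.aemeasurable).1 h
  have hconv : Measure.conv (P.map X) (P.map Y)
      = ((P.map X).prod (P.map Y)).map (fun p : ℕ × ℕ => p.1 + p.2) := rfl
  rw [hconv, ← hm, Measure.map_map (measurable_of_countable _) (hX.prodMk hY)]
  rfl

lemma aux_indepFun_sum [MeasurableSpace Ω] {P : Measure Ω} {ι : Type*}
    {f : ι → Ω → ℕ} (hindep : iIndepFun f P)
    (hmeas : ∀ i, Measurable (f i)) (s : Finset ι) {i : ι} (hi : i ∉ s)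
    {F : Ω → ℕ} (hF : ∀ ω, ∑ j ∈ s, f j ω = F ω) :
    IndepFun F (f i) P := by
  have h := hindep.indepFun_finset_sum_of_notMem hmeas hi
  have he : (∑ j ∈ s, f j) = F := funext fun ω => by
    rw [← hF ω]; exact Finset.sum_apply ω s f
  rwa [he] at h

lemma aux_meas_past {m : ℕ → MeasurableSpace Ω} (hmono : ∀ n, m n ≤ m (n + 1))
    {g : ℕ → ℕ → Ω → ℕ} (hg : ∀ n i, Measurable[m (n + 1)] (g n i))
    {Λ : ℕ → Ω → ℕ} {y : ℕ} (h0 : ∀ ω, Λ 0 ω = y)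
    (hrec : ∀ n ω, Λ (n + 1) ω = max (∑ i ∈ Finset.range (Λ n ω), g n i ω) y) :
    ∀ n, Measurable[m n] (Λ n) := by
  intro n; induction n with
  | zero =>
      have h : Λ 0 = fun _ => y := funext h0
      rw [h]; exact measurable_const
  | succ n ih =>
      have h : Λ (n + 1) = fun ω => max (∑ i ∈ Finset.range (Λ n ω), g n i ω) y :=
        funext (hrec n)
      rw [h]
      exact (measurable_from_top (f := fun s : ℕ => max s y)).comp
        (aux_measurable_sum_rand (ih.mono (hmono n) le_rfl) (hg n))

lemma aux_meas_ambient [MeasurableSpace Ω]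
    {g : ℕ → ℕ → Ω → ℕ} (hg : ∀ n i, Measurable (g n i))
    {Λ : ℕ → Ω → ℕ} {y : ℕ} (h0 : ∀ ω, Λ 0 ω = y)
    (hrec : ∀ n ω, Λ (n + 1) ω = max (∑ i ∈ Finset.range (Λ n ω), g n i ω) y) :
    ∀ n, Measurable (Λ n) := by
  intro n; induction n with
  | zero => rw [funext h0]; exact measurable_const
  | succ n ih =>
      rw [funext (hrec n)]
      exact (measurable_from_top (f := fun s : ℕ => max s y)).comp
        (aux_measurable_sum_rand ih (hg n))

lemma aux_decomp [MeasurableSpace Ω] (P : Measure Ω) {ι : Type*} [Countable ι]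
    (A E : ι → Set Ω) (hA : ∀ i, MeasurableSet (A i)) (hE : ∀ i, MeasurableSet (E i))
    (hdisj : Pairwise (Disjoint on A)) {T : Set Ω} (hT : T = ⋃ i, A i ∩ E i) :
    P T = ∑' i, P (A i ∩ E i) := by
  rw [hT]
  exact measure_iUnion
    (hdisj.mono fun i j h => h.mono Set.inter_subset_left Set.inter_subset_left)
    fun i => (hA i).inter (hE i)

lemma aux_exp [MeasurableSpace Ω] (P : Measure Ω) [IsProbabilityMeasure P]
    (W : Ω → ℕ) (hW : Measurable W) (t : ℕ → ℝ≥0∞) (ht : Monotone t) :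
    ∑' k, P {ω | W ω = k} * t k = t 0 + ∑' j, (t (j + 1) - t j) * P {ω | j < W ω} := by
  have hmeasA : ∀ k, MeasurableSet {ω | W ω = k} := fun k => hW (measurableSet_singleton k)
  have hdisj : Pairwise (Disjoint on fun k => {ω | W ω = k}) := by
    intro k k' hkk'
    simp only [Function.onFun]
    rw [Set.disjoint_left]
    intro ω h1 h2
    exact hkk' (h1.symm.trans h2)
  have htel : ∀ k, t k = t 0 + ∑ j ∈ Finset.range k, (t (j + 1) - t j) := by
    intro k; induction k with
    | zero => simp
    | succ k ih =>
        rw [Finset.sum_range_succ, ← add_assoc, ← ih]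
        exact (add_tsub_cancel_of_le (ht (Nat.le_succ k))).symm
  have hsum1 : ∑' k, P {ω | W ω = k} = 1 := by
    rw [← measure_iUnion hdisj hmeasA]
    have h : ⋃ k, {ω | W ω = k} = Set.univ := by
      ext ω; simp [Set.mem_iUnion]
    rw [h, measure_univ]
  have htail : ∀ j, P {ω | j < W ω} = ∑' k, if j < k then P {ω | W ω = k} else 0 := by
    intro j
    have hsub : ∀ k, (if j < k then {ω | W ω = k} else ∅) ⊆ {ω | W ω = k} := fun k => by
      split_ifs; exacts [subset_rfl, Set.empty_subset _]
    have hc : {ω | j < W ω} = ⋃ k, (if j < k then {ω | W ω = k} else ∅) := by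
      ext ω
      simp only [Set.mem_iUnion, Set.mem_setOf_eq]
      constructor
      · intro h; exact ⟨W ω, by rw [if_pos h]; exact rfl⟩
      · rintro ⟨k, hk⟩
        by_cases h : j < k
        · rw [if_pos h] at hk
          exact lt_of_lt_of_eq h hk.symm
        · rw [if_neg h] at hk; exact absurd hk (Set.notMem_empty ω)
    rw [hc, measure_iUnion (fun k k' h => ((hdisj h).mono (hsub k) (hsub k')))
      (fun k => by split_ifs; exacts [hmeasA k, MeasurableSet.empty])]
    refine tsum_congr fun k => ?_
    split_ifs <;> simp
  calc ∑' k, P {ω | W ω = k} * t k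
      = ∑' k, (P {ω | W ω = k} * t 0
          + ∑' j, if j < k then P {ω | W ω = k} * (t (j + 1) - t j) else 0) := by
        refine tsum_congr fun k => ?_
        have h2 : ∑ j ∈ Finset.range k, P {ω | W ω = k} * (t (j + 1) - t j)
            = ∑' j, if j < k then P {ω | W ω = k} * (t (j + 1) - t j) else 0 := by
          rw [tsum_eq_sum (s := Finset.range k) (fun j hj => if_neg (by simpa using hj))]
          exact Finset.sum_congr rfl fun j hj => (if_pos (Finset.mem_range.1 hj)).symm
        rw [htel k, mul_add, Finset.mul_sum, h2]
    _ = (∑' k, P {ω | W ω = k} * t 0)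
          + ∑' k, ∑' j, (if j < k then P {ω | W ω = k} * (t (j + 1) - t j) else 0) :=
        ENNReal.tsum_add
    _ = t 0 + ∑' j, ∑' k, (if j < k then P {ω | W ω = k} * (t (j + 1) - t j) else 0) := by
        rw [ENNReal.tsum_mul_right, hsum1, one_mul, ENNReal.tsum_comm]
    _ = t 0 + ∑' j, (t (j + 1) - t j) * P {ω | j < W ω} := by
        refine congrArg (t 0 + ·) (tsum_congr fun j => ?_)
        rw [htail j, ← ENNReal.tsum_mul_left]
        refine tsum_congr fun k => ?_
        split_ifs with h
        · exact mul_comm _ _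
        · simp

lemma aux_exp_mono [MeasurableSpace Ω] (P : Measure Ω) [IsProbabilityMeasure P]
    (U V : Ω → ℕ) (hU : Measurable U) (hV : Measurable V) (t : ℕ → ℝ≥0∞) (ht : Monotone t)
    (hUV : ∀ x, P {ω | x < U ω} ≤ P {ω | x < V ω}) :
    ∑' k, P {ω | U ω = k} * t k ≤ ∑' k, P {ω | V ω = k} * t k := by
  rw [aux_exp P U hU t ht, aux_exp P V hV t ht]
  exact add_le_add_right (ENNReal.tsum_le_tsum fun j => mul_le_mul_right (hUV j) _) _

end Aux
theorem stmt16 {Ω : Type*} [MeasurableSpace Ω] (P : Measure Ω) [IsProbabilityMeasure P]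
    (B B1 B2 : ℕ → ℕ → Ω → ℕ)
    (hBm : ∀ n i, Measurable (B n i)) (hB1m : ∀ n i, Measurable (B1 n i))
    (hB2m : ∀ n i, Measurable (B2 n i))
    (hBindep : iIndepFun (fun p : ℕ × ℕ => B p.1 p.2) P)
    (hCindep : iIndepFun
      (fun p : ℕ × ℕ × Bool => if p.2.2 then B1 p.1 p.2.1 else B2 p.1 p.2.1) P)
    (ν : ℕ → Measure ℕ)
    (hBd : ∀ n i, Measure.map (B n i) P = ν n)
    (hB1d : ∀ n i, Measure.map (B1 n i) P = ν n)
    (hB2d : ∀ n i, Measure.map (B2 n i) P = ν n)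
    (y₁ y₂ : ℕ) (hy₁ : 0 < y₁) (hy₂ : 0 < y₂)
    (Λ12 Λ1 Λ2 : ℕ → Ω → ℕ)
    (h12 : ∀ ω, Λ12 0 ω = y₁ + y₂) (h1 : ∀ ω, Λ1 0 ω = y₁) (h2 : ∀ ω, Λ2 0 ω = y₂)
    (hrec12 : ∀ (n : ℕ) ω, Λ12 (n + 1) ω
      = max (∑ i ∈ Finset.range (Λ12 n ω), B n i ω) (y₁ + y₂))
    (hrec1 : ∀ (n : ℕ) ω, Λ1 (n + 1) ω = max (∑ i ∈ Finset.range (Λ1 n ω), B1 n i ω) y₁)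
    (hrec2 : ∀ (n : ℕ) ω, Λ2 (n + 1) ω = max (∑ i ∈ Finset.range (Λ2 n ω), B2 n i ω) y₂) :
    ∀ (n x : ℕ), P {ω | x < Λ12 n ω} ≤ P {ω | x < Λ1 n ω + Λ2 n ω} := by
  classical
  set C : ℕ × ℕ × Bool → Ω → ℕ :=
    fun p => if p.2.2 then B1 p.1 p.2.1 else B2 p.1 p.2.1 with hCdef
  have hC1 : ∀ m i, C (m, i, true) = B1 m i := fun m i => if_pos rfl
  have hC2 : ∀ m i, C (m, i, false) = B2 m i := fun m i => if_neg (by simp)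
  have hCm : ∀ p, Measurable (C p) := by
    rintro ⟨m, i, b⟩
    cases b
    · rw [hC2]; exact hB2m m i
    · rw [hC1]; exact hB1m m i
  have hΛ12m : ∀ n, Measurable (Λ12 n) :=
    aux_meas_ambient (fun n i => hBm n i) h12 hrec12
  have hΛ1m : ∀ n, Measurable (Λ1 n) :=
    aux_meas_ambient (fun n i => hB1m n i) h1 hrec1
  have hΛ2m : ∀ n, Measurable (Λ2 n) :=
    aux_meas_ambient (fun n i => hB2m n i) h2 hrec2
  intro n
  induction n with
  | zero =>
      intro x
      have h : {ω | x < Λ12 0 ω} = {ω | x < Λ1 0 ω + Λ2 0 ω} := by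
        ext ω; simp [h12, h1, h2]
      exact le_of_eq (congrArg P h)
  | succ n ih =>
      intro x
      by_cases hx : x < y₁ + y₂
      · have huniv : {ω | x < Λ1 (n + 1) ω + Λ2 (n + 1) ω} = Set.univ :=
          Set.eq_univ_of_forall fun ω => lt_of_lt_of_le hx
            (by rw [hrec1 n ω, hrec2 n ω]
                exact add_le_add (le_max_right _ _) (le_max_right _ _))
        calc P {ω | x < Λ12 (n + 1) ω} ≤ 1 := prob_le_one
          _ = P {ω | x < Λ1 (n + 1) ω + Λ2 (n + 1) ω} := by rw [huniv, measure_univ]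
      · have hνP : IsProbabilityMeasure (ν n) := by
          rw [← hBd n 0]; exact Measure.isProbabilityMeasure_map (hBm n 0).aemeasurable
        have hSBm : ∀ k, Measurable (fun ω => ∑ i ∈ Finset.range k, B n i ω) :=
          fun k => Finset.measurable_sum _ fun i _ => hBm n i
        have hS1m : ∀ a, Measurable (fun ω => ∑ i ∈ Finset.range a, B1 n i ω) :=
          fun a => Finset.measurable_sum _ fun i _ => hB1m n i
        have hS2m : ∀ b, Measurable (fun ω => ∑ i ∈ Finset.range b, B2 n i ω) :=
          fun b => Finset.measurable_sum _ fun i _ => hB2m n i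
        -- law of the B-sums
        have hlawB : ∀ k, P.map (fun ω => ∑ i ∈ Finset.range k, B n i ω) = convPow (ν n) k := by
          intro k; induction k with
          | zero =>
              have h : (fun ω => ∑ i ∈ Finset.range 0, B n i ω) = fun _ : Ω => (0 : ℕ) := by
                funext ω; simp
              rw [h]
              simp [convPow, Measure.map_const]
          | succ k ihk =>
              have hip : IndepFun (fun ω => ∑ i ∈ Finset.range k, B n i ω) (B n k) P := by
                refine aux_indepFun_sum hBindep (fun p => hBm p.1 p.2)
                  ((Finset.range k).image fun i => (n, i)) (i := (n, k)) (by simp)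
                  (fun ω => ?_)
                rw [Finset.sum_image (fun a _ b _ h => by simpa using h)]
              have h : (fun ω => ∑ i ∈ Finset.range (k + 1), B n i ω)
                  = fun ω => (∑ i ∈ Finset.range k, B n i ω) + B n k ω :=
                funext fun ω => Finset.sum_range_succ _ _
              rw [h, aux_map_add_eq_conv P (hSBm k) (hBm n k) hip, ihk, hBd n k]
              rfl
        have hlaw1 : ∀ a, P.map (fun ω => ∑ i ∈ Finset.range a, B1 n i ω)
            = convPow (ν n) a := by
          intro a; induction a with
          | zero =>
              have h : (fun ω => ∑ i ∈ Finset.range 0, B1 n i ω) = fun _ : Ω => (0 : ℕ) := by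
                funext ω; simp
              rw [h]
              simp [convPow, Measure.map_const]
          | succ a iha =>
              have hip : IndepFun (fun ω => ∑ i ∈ Finset.range a, B1 n i ω) (B1 n a) P := by
                have h := aux_indepFun_sum hCindep hCm
                  ((Finset.range a).image fun i => (n, i, true)) (i := (n, a, true))
                  (by simp) (F := fun ω => ∑ i ∈ Finset.range a, B1 n i ω)
                  (fun ω => by
                    rw [Finset.sum_image (fun a1 _ b1 _ h => by simpa using h)]
                    exact Finset.sum_congr rfl fun i _ => congrFun (hC1 n i) ω)
                rwa [hC1 n a] at h
              have h : (fun ω => ∑ i ∈ Finset.range (a + 1), B1 n i ω)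
                  = fun ω => (∑ i ∈ Finset.range a, B1 n i ω) + B1 n a ω :=
                funext fun ω => Finset.sum_range_succ _ _
              rw [h, aux_map_add_eq_conv P (hS1m a) (hB1m n a) hip, iha, hB1d n a]
              rfl
        have hlawMix : ∀ a b, P.map (fun ω => (∑ i ∈ Finset.range a, B1 n i ω)
            + ∑ i ∈ Finset.range b, B2 n i ω) = convPow (ν n) (a + b) := by
          intro a b; induction b with
          | zero =>
              have h : (fun ω => (∑ i ∈ Finset.range a, B1 n i ω)
                  + ∑ i ∈ Finset.range 0, B2 n i ω)
                  = fun ω => ∑ i ∈ Finset.range a, B1 n i ω := by funext ω; simp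
              rw [h, hlaw1 a, Nat.add_zero]
          | succ b ihb =>
              have hdisjF : Disjoint ((Finset.range a).image fun i => (n, i, true))
                  ((Finset.range b).image fun i => (n, i, false)) := by
                rw [Finset.disjoint_left]
                intro p hp hq
                obtain ⟨u, _, hu⟩ := Finset.mem_image.1 hp
                obtain ⟨v, _, hv⟩ := Finset.mem_image.1 hq
                rw [← hu] at hv
                exact Bool.noConfusion (congrArg (fun q : ℕ × ℕ × Bool => q.2.2) hv)
              have hip : IndepFun (fun ω => (∑ i ∈ Finset.range a, B1 n i ω)
                  + ∑ i ∈ Finset.range b, B2 n i ω) (B2 n b) P := by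
                have h := aux_indepFun_sum hCindep hCm
                  (((Finset.range a).image fun i => (n, i, true))
                    ∪ ((Finset.range b).image fun i => (n, i, false)))
                  (i := (n, b, false)) (by simp)
                  (F := fun ω => (∑ i ∈ Finset.range a, B1 n i ω)
                    + ∑ i ∈ Finset.range b, B2 n i ω)
                  (fun ω => by
                    rw [Finset.sum_union hdisjF,
                      Finset.sum_image (fun a1 _ b1 _ h => by simpa using h),
                      Finset.sum_image (fun a1 _ b1 _ h => by simpa using h)]
                    exact congrArg₂ (· + ·)
                      (Finset.sum_congr rfl fun i _ => congrFun (hC1 n i) ω)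
                      (Finset.sum_congr rfl fun i _ => congrFun (hC2 n i) ω))
                rwa [hC2 n b] at h
              have h : (fun ω => (∑ i ∈ Finset.range a, B1 n i ω)
                  + ∑ i ∈ Finset.range (b + 1), B2 n i ω)
                  = fun ω => ((∑ i ∈ Finset.range a, B1 n i ω)
                    + ∑ i ∈ Finset.range b, B2 n i ω) + B2 n b ω :=
                funext fun ω => by rw [Finset.sum_range_succ]; exact (add_assoc _ _ _).symm
              rw [h, aux_map_add_eq_conv P (show Measurable (fun ω => (∑ i ∈ Finset.range a, B1 n i ω)
                  + ∑ i ∈ Finset.range b, B2 n i ω) from (hS1m a).add (hS2m b)) (hB2m n b) hip, ihb,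
                hB2d n b]
              rfl
        -- the tail function t
        set t : ℕ → ℝ≥0∞ := fun k => (convPow (ν n) k) {s | x < s} with htdef
        have hBt : ∀ k, P {ω | x < ∑ i ∈ Finset.range k, B n i ω} = t k := by
          intro k
          simp only [htdef]
          rw [← hlawB k,
            Measure.map_apply (hSBm k) (MeasurableSpace.measurableSet_top)]
          rfl
        have hmixt : ∀ a b, P {ω | x < (∑ i ∈ Finset.range a, B1 n i ω)
            + ∑ i ∈ Finset.range b, B2 n i ω} = t (a + b) := by
          intro a b
          simp only [htdef]
          rw [← hlawMix a b,
            Measure.map_apply (show Measurable (fun ω => (∑ i ∈ Finset.range a, B1 n i ω)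
              + ∑ i ∈ Finset.range b, B2 n i ω) from (hS1m a).add (hS2m b)) (MeasurableSpace.measurableSet_top)]
          rfl
        have htmono : Monotone t := by
          intro k k' hkk
          rw [← hBt k, ← hBt k']
          exact measure_mono (Set.setOf_subset_setOf.2 fun ω h => lt_of_lt_of_le h
            (Finset.sum_le_sum_of_subset (Finset.range_subset_range.2 hkk)))
        -- independence of past and present, B side
        have hIndB : Indep
            (⨆ p ∈ {p : ℕ × ℕ | p.1 < n}, MeasurableSpace.comap (B p.1 p.2) inferInstance)
            (⨆ p ∈ {p : ℕ × ℕ | p.1 = n}, MeasurableSpace.comap (B p.1 p.2) inferInstance)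
            P :=
          indep_iSup_of_disjoint
            (m := fun p : ℕ × ℕ => MeasurableSpace.comap (B p.1 p.2) inferInstance)
            (S := {p : ℕ × ℕ | p.1 < n}) (T := {p : ℕ × ℕ | p.1 = n})
            (fun p => (hBm p.1 p.2).comap_le) hBindep.iIndep
            (Set.disjoint_left.2 fun p hp hq => Nat.lt_irrefl n (hq ▸ hp))
        have hΛ12past : ∀ m, Measurable[⨆ p ∈ {p : ℕ × ℕ | p.1 < m},
            MeasurableSpace.comap (B p.1 p.2) inferInstance] (Λ12 m) :=
          aux_meas_past
            (m := fun m => ⨆ p ∈ {p : ℕ × ℕ | p.1 < m},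
              MeasurableSpace.comap (B p.1 p.2) inferInstance)
            (fun m => biSup_mono fun p hp => Nat.lt_succ_of_lt hp)
            (fun m i => (Measurable.of_comap_le le_rfl).mono
              (le_biSup (fun p : ℕ × ℕ => MeasurableSpace.comap (B p.1 p.2) inferInstance)
                (show ((m, i) : ℕ × ℕ) ∈ {p : ℕ × ℕ | p.1 < m + 1} from Nat.lt_succ_self m))
              le_rfl)
            h12 hrec12
        have hnowB : ∀ k, Measurable[⨆ p ∈ {p : ℕ × ℕ | p.1 = n},
            MeasurableSpace.comap (B p.1 p.2) inferInstance]
            (fun ω => ∑ i ∈ Finset.range k, B n i ω) :=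
          fun k => Finset.measurable_sum _ fun i _ => (Measurable.of_comap_le le_rfl).mono
            (le_biSup (fun p : ℕ × ℕ => MeasurableSpace.comap (B p.1 p.2) inferInstance)
              (show ((n, i) : ℕ × ℕ) ∈ {p : ℕ × ℕ | p.1 = n} from rfl)) le_rfl
        have hsplitB : ∀ k, P ({ω | Λ12 n ω = k}
              ∩ {ω | x < ∑ i ∈ Finset.range k, B n i ω})
            = P {ω | Λ12 n ω = k} * t k := by
          intro k
          have hind := (Indep_iff _ _ _).1 hIndB {ω | Λ12 n ω = k}
            {ω | x < ∑ i ∈ Finset.range k, B n i ω}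
            (hΛ12past n (measurableSet_singleton k))
            (hnowB k (MeasurableSpace.measurableSet_top (s := {s : ℕ | x < s})))
          rw [hind, hBt k]
        -- independence of past and present, C side
        have hIndC : Indep
            (⨆ p ∈ {p : ℕ × ℕ × Bool | p.1 < n}, MeasurableSpace.comap (C p) inferInstance)
            (⨆ p ∈ {p : ℕ × ℕ × Bool | p.1 = n}, MeasurableSpace.comap (C p) inferInstance)
            P :=
          indep_iSup_of_disjoint
            (m := fun p : ℕ × ℕ × Bool => MeasurableSpace.comap (C p) inferInstance)
            (S := {p : ℕ × ℕ × Bool | p.1 < n}) (T := {p : ℕ × ℕ × Bool | p.1 = n})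
            (fun p => (hCm p).comap_le) hCindep.iIndep
            (Set.disjoint_left.2 fun p hp hq => Nat.lt_irrefl n (hq ▸ hp))
        have hB1now : ∀ i : ℕ, Measurable[⨆ p ∈ {p : ℕ × ℕ × Bool | p.1 = n},
            MeasurableSpace.comap (C p) inferInstance] (B1 n i) := by
          intro i
          have h2 : Measurable[⨆ p ∈ {p : ℕ × ℕ × Bool | p.1 = n},
              MeasurableSpace.comap (C p) inferInstance] (C (n, i, true)) :=
            (Measurable.of_comap_le le_rfl).mono
              (le_biSup (fun p : ℕ × ℕ × Bool => MeasurableSpace.comap (C p) inferInstance)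
                (show ((n, i, true) : ℕ × ℕ × Bool) ∈ {p : ℕ × ℕ × Bool | p.1 = n} from rfl))
              le_rfl
          rwa [hC1 n i] at h2
        have hB2now : ∀ i : ℕ, Measurable[⨆ p ∈ {p : ℕ × ℕ × Bool | p.1 = n},
            MeasurableSpace.comap (C p) inferInstance] (B2 n i) := by
          intro i
          have h2 : Measurable[⨆ p ∈ {p : ℕ × ℕ × Bool | p.1 = n},
              MeasurableSpace.comap (C p) inferInstance] (C (n, i, false)) :=
            (Measurable.of_comap_le le_rfl).mono
              (le_biSup (fun p : ℕ × ℕ × Bool => MeasurableSpace.comap (C p) inferInstance)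
                (show ((n, i, false) : ℕ × ℕ × Bool) ∈ {p : ℕ × ℕ × Bool | p.1 = n} from rfl))
              le_rfl
          rwa [hC2 n i] at h2
        have hΛ1past : ∀ m, Measurable[⨆ p ∈ {p : ℕ × ℕ × Bool | p.1 < m},
            MeasurableSpace.comap (C p) inferInstance] (Λ1 m) := by
          refine aux_meas_past
            (m := fun m => ⨆ p ∈ {p : ℕ × ℕ × Bool | p.1 < m},
              MeasurableSpace.comap (C p) inferInstance)
            (fun m => biSup_mono fun p hp => Nat.lt_succ_of_lt hp)
            (fun m i => ?_) h1 hrec1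
          have h2 : Measurable[⨆ p ∈ {p : ℕ × ℕ × Bool | p.1 < m + 1},
              MeasurableSpace.comap (C p) inferInstance] (C (m, i, true)) :=
            (Measurable.of_comap_le le_rfl).mono
              (le_biSup (fun p : ℕ × ℕ × Bool => MeasurableSpace.comap (C p) inferInstance)
                (show ((m, i, true) : ℕ × ℕ × Bool) ∈ {p : ℕ × ℕ × Bool | p.1 < m + 1} from
                  Nat.lt_succ_self m))
              le_rfl
          rwa [hC1 m i] at h2
        have hΛ2past : ∀ m, Measurable[⨆ p ∈ {p : ℕ × ℕ × Bool | p.1 < m},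
            MeasurableSpace.comap (C p) inferInstance] (Λ2 m) := by
          refine aux_meas_past
            (m := fun m => ⨆ p ∈ {p : ℕ × ℕ × Bool | p.1 < m},
              MeasurableSpace.comap (C p) inferInstance)
            (fun m => biSup_mono fun p hp => Nat.lt_succ_of_lt hp)
            (fun m i => ?_) h2 hrec2
          have h2' : Measurable[⨆ p ∈ {p : ℕ × ℕ × Bool | p.1 < m + 1},
              MeasurableSpace.comap (C p) inferInstance] (C (m, i, false)) :=
            (Measurable.of_comap_le le_rfl).mono
              (le_biSup (fun p : ℕ × ℕ × Bool => MeasurableSpace.comap (C p) inferInstance)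
                (show ((m, i, false) : ℕ × ℕ × Bool) ∈ {p : ℕ × ℕ × Bool | p.1 < m + 1} from
                  Nat.lt_succ_self m))
              le_rfl
          rwa [hC2 m i] at h2'
        have hsplitC : ∀ q : ℕ × ℕ, P (({ω | Λ1 n ω = q.1} ∩ {ω | Λ2 n ω = q.2})
              ∩ {ω | x < (∑ i ∈ Finset.range q.1, B1 n i ω)
                + ∑ i ∈ Finset.range q.2, B2 n i ω})
            = P ({ω | Λ1 n ω = q.1} ∩ {ω | Λ2 n ω = q.2}) * t (q.1 + q.2) := by
          intro q
          have hnowC : Measurable[⨆ p ∈ {p : ℕ × ℕ × Bool | p.1 = n},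
              MeasurableSpace.comap (C p) inferInstance]
              (fun ω => (∑ i ∈ Finset.range q.1, B1 n i ω)
                + ∑ i ∈ Finset.range q.2, B2 n i ω) :=
            (Finset.measurable_sum _ fun i _ => hB1now i).add
              (Finset.measurable_sum _ fun i _ => hB2now i)
          have hind := (Indep_iff _ _ _).1 hIndC
            ({ω | Λ1 n ω = q.1} ∩ {ω | Λ2 n ω = q.2})
            {ω | x < (∑ i ∈ Finset.range q.1, B1 n i ω)
              + ∑ i ∈ Finset.range q.2, B2 n i ω}
            ((hΛ1past n (measurableSet_singleton q.1)).inter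
              (hΛ2past n (measurableSet_singleton q.2)))
            (hnowC (MeasurableSpace.measurableSet_top (s := {s : ℕ | x < s})))
          rw [hind, hmixt q.1 q.2]
        -- decompositions
        have hLdec : P {ω | x < ∑ i ∈ Finset.range (Λ12 n ω), B n i ω}
            = ∑' k, P ({ω | Λ12 n ω = k}
              ∩ {ω | x < ∑ i ∈ Finset.range k, B n i ω}) := by
          refine aux_decomp P _ _ (fun k => hΛ12m n (measurableSet_singleton k))
            (fun k => hSBm k (MeasurableSpace.measurableSet_top)) ?_ ?_
          · intro k k' hkk'
            simp only [Function.onFun]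
            rw [Set.disjoint_left]
            intro ω h1' h2'
            exact hkk' (h1'.symm.trans h2')
          · ext ω
            simp only [Set.mem_setOf_eq, Set.mem_iUnion, Set.mem_inter_iff]
            exact ⟨fun h => ⟨Λ12 n ω, rfl, h⟩, fun ⟨k, hk, h⟩ => by rw [hk]; exact h⟩
        have hRdec : P {ω | x < (∑ i ∈ Finset.range (Λ1 n ω), B1 n i ω)
              + ∑ i ∈ Finset.range (Λ2 n ω), B2 n i ω}
            = ∑' q : ℕ × ℕ, P (({ω | Λ1 n ω = q.1} ∩ {ω | Λ2 n ω = q.2})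
              ∩ {ω | x < (∑ i ∈ Finset.range q.1, B1 n i ω)
                + ∑ i ∈ Finset.range q.2, B2 n i ω}) := by
          refine aux_decomp (ι := ℕ × ℕ) P _ _
            (fun q : ℕ × ℕ => ((hΛ1m n) (measurableSet_singleton q.1)).inter
              ((hΛ2m n) (measurableSet_singleton q.2)))
            (fun q : ℕ × ℕ => ((hS1m q.1).add (hS2m q.2))
              (MeasurableSpace.measurableSet_top)) ?_ ?_
          · intro q q' hne
            simp only [Function.onFun]
            rw [Set.disjoint_left]
            rintro ω ⟨ha, hb⟩ ⟨ha', hb'⟩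
            exact hne (Prod.ext (ha.symm.trans ha') (hb.symm.trans hb'))
          · ext ω
            simp only [Set.mem_setOf_eq, Set.mem_iUnion, Set.mem_inter_iff]
            constructor
            · intro h; exact ⟨(Λ1 n ω, Λ2 n ω), ⟨rfl, rfl⟩, h⟩
            · rintro ⟨q, ⟨ha, hb⟩, h⟩
              rw [ha, hb]; exact h
        -- regrouping
        have hAm : ∀ q : ℕ × ℕ, MeasurableSet ({ω | Λ1 n ω = q.1} ∩ {ω | Λ2 n ω = q.2}) :=
          fun q => ((hΛ1m n) (measurableSet_singleton q.1)).inter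
            ((hΛ2m n) (measurableSet_singleton q.2))
        have hAdisj : Pairwise (Disjoint on
            fun q : ℕ × ℕ => {ω | Λ1 n ω = q.1} ∩ {ω | Λ2 n ω = q.2}) := by
          intro q q' hne
          simp only [Function.onFun]
          rw [Set.disjoint_left]
          rintro ω ⟨ha, hb⟩ ⟨ha', hb'⟩
          exact hne (Prod.ext (ha.symm.trans ha') (hb.symm.trans hb'))
        have hWm : ∀ m, P {ω | Λ1 n ω + Λ2 n ω = m}
            = ∑' q : ℕ × ℕ, (if q.1 + q.2 = m
              then P ({ω | Λ1 n ω = q.1} ∩ {ω | Λ2 n ω = q.2}) else 0) := by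
          intro m
          have hsub : ∀ q : ℕ × ℕ, (if q.1 + q.2 = m
              then ({ω | Λ1 n ω = q.1} ∩ {ω | Λ2 n ω = q.2}) else ∅)
              ⊆ ({ω | Λ1 n ω = q.1} ∩ {ω | Λ2 n ω = q.2}) := fun q => by
            split_ifs; exacts [subset_rfl, Set.empty_subset _]
          have hc : {ω | Λ1 n ω + Λ2 n ω = m} = ⋃ q : ℕ × ℕ,
              (if q.1 + q.2 = m then ({ω | Λ1 n ω = q.1} ∩ {ω | Λ2 n ω = q.2}) else ∅) := by
            ext ω
            simp only [Set.mem_iUnion, Set.mem_setOf_eq]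
            constructor
            · intro h
              exact ⟨(Λ1 n ω, Λ2 n ω), by rw [if_pos h]; exact ⟨rfl, rfl⟩⟩
            · rintro ⟨q, hq⟩
              by_cases h : q.1 + q.2 = m
              · rw [if_pos h] at hq
                obtain ⟨ha, hb⟩ := hq
                rw [show Λ1 n ω = q.1 from ha, show Λ2 n ω = q.2 from hb]
                exact h
              · rw [if_neg h] at hq; exact absurd hq (Set.notMem_empty ω)
          rw [hc, measure_iUnion (fun q q' h => (hAdisj h).mono (hsub q) (hsub q'))
            (fun q => by split_ifs; exacts [hAm q, MeasurableSet.empty])]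
          exact tsum_congr fun q => by split_ifs <;> simp
        have hgroup : ∑' q : ℕ × ℕ, P ({ω | Λ1 n ω = q.1} ∩ {ω | Λ2 n ω = q.2})
              * t (q.1 + q.2)
            = ∑' m, P {ω | Λ1 n ω + Λ2 n ω = m} * t m := by
          calc ∑' q : ℕ × ℕ, P ({ω | Λ1 n ω = q.1} ∩ {ω | Λ2 n ω = q.2}) * t (q.1 + q.2)
              = ∑' q : ℕ × ℕ, ∑' m, (if q.1 + q.2 = m
                then P ({ω | Λ1 n ω = q.1} ∩ {ω | Λ2 n ω = q.2}) * t m else 0) :=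
              tsum_congr fun q =>
                ((tsum_eq_single
                  (f := fun m => if q.1 + q.2 = m
                    then P ({ω | Λ1 n ω = q.1} ∩ {ω | Λ2 n ω = q.2}) * t m else 0)
                  (q.1 + q.2) fun m hm => if_neg fun h => hm h.symm).trans
                  (if_pos rfl)).symm
            _ = ∑' m, ∑' q : ℕ × ℕ, (if q.1 + q.2 = m
                then P ({ω | Λ1 n ω = q.1} ∩ {ω | Λ2 n ω = q.2}) * t m else 0) :=
              ENNReal.tsum_comm
            _ = ∑' m, P {ω | Λ1 n ω + Λ2 n ω = m} * t m := by
              refine tsum_congr fun m => ?_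
              rw [hWm m, ← ENNReal.tsum_mul_right]
              exact tsum_congr fun q => by split_ifs <;> simp
        -- final chain
        have hLset : {ω | x < Λ12 (n + 1) ω}
            = {ω | x < ∑ i ∈ Finset.range (Λ12 n ω), B n i ω} := by
          ext ω
          simp only [Set.mem_setOf_eq, hrec12 n ω, lt_max_iff, hx, or_false]
        have hRsub : {ω | x < (∑ i ∈ Finset.range (Λ1 n ω), B1 n i ω)
              + ∑ i ∈ Finset.range (Λ2 n ω), B2 n i ω}
            ⊆ {ω | x < Λ1 (n + 1) ω + Λ2 (n + 1) ω} := by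
          intro ω h
          simp only [Set.mem_setOf_eq] at h ⊢
          refine lt_of_lt_of_le h ?_
          rw [hrec1 n ω, hrec2 n ω]
          exact add_le_add (le_max_left _ _) (le_max_left _ _)
        calc P {ω | x < Λ12 (n + 1) ω}
            = ∑' k, P {ω | Λ12 n ω = k} * t k := by
              rw [hLset, hLdec]; exact tsum_congr hsplitB
          _ ≤ ∑' m, P {ω | Λ1 n ω + Λ2 n ω = m} * t m :=
              aux_exp_mono P (Λ12 n) (fun ω => Λ1 n ω + Λ2 n ω) (hΛ12m n)
                ((hΛ1m n).add (hΛ2m n)) t htmono ih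
          _ = ∑' q : ℕ × ℕ, P ({ω | Λ1 n ω = q.1} ∩ {ω | Λ2 n ω = q.2}) * t (q.1 + q.2) :=
              hgroup.symm
          _ = P {ω | x < (∑ i ∈ Finset.range (Λ1 n ω), B1 n i ω)
                + ∑ i ∈ Finset.range (Λ2 n ω), B2 n i ω} := by
              rw [hRdec]; exact (tsum_congr hsplitC).symm
          _ ≤ P {ω | x < Λ1 (n + 1) ω + Λ2 (n + 1) ω} := measure_mono hRsub
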